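/- Let A be a K-algebra over a field K of characteristic zero, containing elements x, y with x*y − y*x = x. Define w(k,ℓ) = (x*y^k − y^k*x)*x^ℓ. Then for all k ≥ 1 and ℓ ≥ 0, y * w(k,ℓ) = (k/(k+1)) · w(k+1,ℓ) − (1/(k+1)) · ∑_{i=1}^{k} C(k+1,i) · B_{k+1−i} · w(i,ℓ), where B_n are the Bernoulli numbers with B_1 = 1/2. -/

import Mathlib

open Finset

lemma choose_swap {n j m : ℕ} (h : j + m ≤ n) :
    n.choose j * (n - j).choose m = n.choose m * (n - m).choose j := by
  have h1 := Nat.choose_mul (n := n) (Nat.le_add_right j m)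
  have h2 := Nat.choose_mul (n := n) (Nat.le_add_left m j)
  rw [Nat.add_sub_cancel_left] at h1
  rw [Nat.add_sub_cancel] at h2
  have h3 : (j + m).choose j = (j + m).choose m := by
    rw [← Nat.choose_symm (Nat.le_add_left m j), Nat.add_sub_cancel]
  rw [← h1, h3, h2]

lemma hpow_exp (K : Type*) {A : Type*} [Field K] [CharZero K] [Ring A] [Algebra K A]
    (y : A) (n : ℕ) : (y + 1) ^ n = ∑ m ∈ range (n + 1), (n.choose m : K) • y ^ m := by
  rw [Commute.add_pow (Commute.one_right y)]
  refine Finset.sum_congr rfl fun m _ => ?_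
  simp [Nat.cast_smul_eq_nsmul, nsmul_eq_mul, (Nat.cast_commute (n.choose m) (y ^ m)).eq]

lemma hdiff_exp (K : Type*) {A : Type*} [Field K] [CharZero K] [Ring A] [Algebra K A]
    (y : A) {n : ℕ} (_hn : 1 ≤ n) :
    (y + 1) ^ n - y ^ n = ∑ m ∈ range n, (n.choose m : K) • y ^ m := by
  rw [hpow_exp K y n, Finset.sum_range_succ, Nat.choose_self]
  simp

lemma keyC (K : Type*) {A : Type*} [Field K] [CharZero K] [Ring A] [Algebra K A]
    (y : A) (k : ℕ) :
    ∑ j ∈ range (k + 1),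
      (((k + 1).choose j : K) * algebraMap ℚ K (bernoulli' j)) •
        ((y + 1) ^ (k + 1 - j) - y ^ (k + 1 - j)) = ((k : K) + 1) • (y + 1) ^ k := by
  have step1 : ∀ j ∈ range (k + 1),
      (((k + 1).choose j : K) * algebraMap ℚ K (bernoulli' j)) •
        ((y + 1) ^ (k + 1 - j) - y ^ (k + 1 - j)) =
      ∑ m ∈ range (k + 1 - j),
        (((k + 1).choose j : K) * algebraMap ℚ K (bernoulli' j) * ((k + 1 - j).choose m : K))
          • y ^ m := by
    intro j hj
    rw [mem_range] at hj
    rw [hdiff_exp K y (by omega), Finset.smul_sum]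
    exact Finset.sum_congr rfl fun m _ => by rw [smul_smul]
  rw [Finset.sum_congr rfl step1]
  rw [Finset.sum_comm' (t' := range (k + 1)) (s' := fun m => range (k + 1 - m))
    (by intro j m; simp only [mem_range]; omega)]
  have step2 : ∀ m ∈ range (k + 1),
      ∑ j ∈ range (k + 1 - m),
        (((k + 1).choose j : K) * algebraMap ℚ K (bernoulli' j) * ((k + 1 - j).choose m : K))
          • y ^ m =
      ((((k + 1).choose m) * (k + 1 - m) : ℕ) : K) • y ^ m := by
    intro m hm
    rw [mem_range] at hm
    rw [← Finset.sum_smul]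
    congr 1
    have : ∀ j ∈ range (k + 1 - m),
        ((k + 1).choose j : K) * algebraMap ℚ K (bernoulli' j) * ((k + 1 - j).choose m : K) =
        ((k + 1).choose m : K) * (((k + 1 - m).choose j : K) * algebraMap ℚ K (bernoulli' j)) := by
      intro j hj
      rw [mem_range] at hj
      have hcs : (k + 1).choose j * (k + 1 - j).choose m
          = (k + 1).choose m * (k + 1 - m).choose j := choose_swap (by omega)
      have : ((k + 1).choose j : K) * ((k + 1 - j).choose m : K)
          = ((k + 1).choose m : K) * ((k + 1 - m).choose j : K) := by
        rw [← Nat.cast_mul, ← Nat.cast_mul, hcs]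
      calc ((k + 1).choose j : K) * algebraMap ℚ K (bernoulli' j) * ((k + 1 - j).choose m : K)
          = (((k + 1).choose j : K) * ((k + 1 - j).choose m : K)) * algebraMap ℚ K (bernoulli' j) := by ring
        _ = (((k + 1).choose m : K) * ((k + 1 - m).choose j : K)) * algebraMap ℚ K (bernoulli' j) := by rw [this]
        _ = ((k + 1).choose m : K) * (((k + 1 - m).choose j : K) * algebraMap ℚ K (bernoulli' j)) := by ring
    rw [Finset.sum_congr rfl this, ← Finset.mul_sum]
    have hb : ∑ j ∈ range (k + 1 - m), ((k + 1 - m).choose j : K) * algebraMap ℚ K (bernoulli' j)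
        = ((k + 1 - m : ℕ) : K) := by
      have := sum_bernoulli' (k + 1 - m)
      calc ∑ j ∈ range (k + 1 - m), ((k + 1 - m).choose j : K) * algebraMap ℚ K (bernoulli' j)
          = algebraMap ℚ K (∑ j ∈ range (k + 1 - m), ((k + 1 - m).choose j : ℚ) * bernoulli' j) := by
            rw [map_sum]; exact Finset.sum_congr rfl fun j _ => by
              rw [map_mul, map_natCast]
        _ = ((k + 1 - m : ℕ) : K) := by rw [this, map_natCast]
    rw [hb, Nat.cast_mul]
  rw [Finset.sum_congr rfl step2, hpow_exp K y k, Finset.smul_sum]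
  refine Finset.sum_congr rfl fun m hm => ?_
  rw [smul_smul]
  congr 1
  rw [mem_range] at hm
  have := Nat.choose_mul_succ_eq k m
  have : ((k.choose m * (k + 1) : ℕ) : K) = (((k + 1).choose m * (k + 1 - m) : ℕ) : K) := by
    rw [this]
  push_cast at this ⊢
  rw [← this]; ring

theorem y_mul_w (K : Type*) (A : Type*) [Field K] [CharZero K] [Ring A] [Algebra K A]
    (x y : A) (h : x * y - y * x = x) (k ℓ : ℕ) (hk : 1 ≤ k) :
    y * ((x * y ^ k - y ^ k * x) * x ^ ℓ) =
      ((k : K) / (k + 1)) • ((x * y ^ (k + 1) - y ^ (k + 1) * x) * x ^ ℓ) -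
      ((1 : K) / (k + 1)) • ∑ i ∈ Finset.Icc 1 k,
        (((k + 1).choose i : K) * algebraMap ℚ K (bernoulli' (k + 1 - i))) •
          ((x * y ^ i - y ^ i * x) * x ^ ℓ) := by
  have hx : x * y = (y + 1) * x := by
    rw [sub_eq_iff_eq_add] at h
    rw [h, add_mul, one_mul, add_comm]
  have hxy : ∀ n : ℕ, x * y ^ n = (y + 1) ^ n * x := by
    intro n
    induction n with
    | zero => simp
    | succ n ih =>
      rw [pow_succ, ← mul_assoc, ih, mul_assoc, hx, ← mul_assoc, ← pow_succ]
  have hw : ∀ n : ℕ, (x * y ^ n - y ^ n * x) * x ^ ℓ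
      = ((y + 1) ^ n - y ^ n) * (x * x ^ ℓ) := by
    intro n
    rw [hxy n, ← sub_mul, mul_assoc]
  simp only [hw]
  have key : y * ((y + 1) ^ k - y ^ k) =
      ((k : K) / (k + 1)) • ((y + 1) ^ (k + 1) - y ^ (k + 1)) -
      ((1 : K) / (k + 1)) • ∑ i ∈ Finset.Icc 1 k,
        (((k + 1).choose i : K) * algebraMap ℚ K (bernoulli' (k + 1 - i))) •
          ((y + 1) ^ i - y ^ i) := by
    have hk1 : ((k : K) + 1) ≠ 0 := Nat.cast_add_one_ne_zero k
    have hS : ∑ i ∈ Finset.Icc 1 k,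
        (((k + 1).choose i : K) * algebraMap ℚ K (bernoulli' (k + 1 - i))) •
          ((y + 1) ^ i - y ^ i)
        = ((k : K) + 1) • (y + 1) ^ k - ((y + 1) ^ (k + 1) - y ^ (k + 1)) := by
      have hC := keyC K y k
      rw [Finset.sum_range_succ'] at hC
      have h0 : (((k + 1).choose 0 : K) * algebraMap ℚ K (bernoulli' 0)) •
          ((y + 1) ^ (k + 1 - 0) - y ^ (k + 1 - 0)) = (y + 1) ^ (k + 1) - y ^ (k + 1) := by
        simp
      rw [h0] at hC
      have hre : ∑ i ∈ Finset.Icc 1 k,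
          (((k + 1).choose i : K) * algebraMap ℚ K (bernoulli' (k + 1 - i))) •
            ((y + 1) ^ i - y ^ i)
          = ∑ j ∈ range k,
            (((k + 1).choose (j + 1) : K) * algebraMap ℚ K (bernoulli' (j + 1))) •
              ((y + 1) ^ (k + 1 - (j + 1)) - y ^ (k + 1 - (j + 1))) := by
        rw [← Finset.Ico_add_one_right_eq_Icc, Finset.sum_Ico_eq_sum_range]
        have hkk : k + 1 - 1 = k := by omega
        rw [hkk]
        rw [← Finset.sum_range_reflect]
        refine Finset.sum_congr rfl fun j hj => ?_
        rw [mem_range] at hj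
        have e1 : 1 + (k - 1 - j) = k - j := by omega
        have e2 : k + 1 - (k - j) = j + 1 := by omega
        have e3 : (k + 1).choose (k - j) = (k + 1).choose (j + 1) := by
          rw [← Nat.choose_symm (by omega : j + 1 ≤ k + 1)]
          congr 1
          omega
        have e5 : k + 1 - (j + 1) = k - j := by omega
        rw [e1, e2, e3, e5]
      rw [hre]
      linear_combination (norm := module) hC
    rw [hS]
    have hd : (y + 1) ^ (k + 1) - y ^ (k + 1)
        = y * ((y + 1) ^ k - y ^ k) + (y + 1) ^ k := by
      rw [pow_succ', pow_succ', add_mul, one_mul, mul_sub]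
      abel
    rw [hd]
    match_scalars
    · field_simp
      ring
    · field_simp
      ring

  calc y * (((y + 1) ^ k - y ^ k) * (x * x ^ ℓ))
      = (y * ((y + 1) ^ k - y ^ k)) * (x * x ^ ℓ) := by rw [mul_assoc]
    _ = _ := by rw [key]; simp only [sub_mul, smul_mul_assoc, Finset.sum_mul]
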